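/- Let v : ℝ → ℝ be five times continuously differentiable and let x* ∈ ℝ. For h > 0 and j = −2, −1, 0, 1, 2 define the cell averages A_j(h) = (1/h)∫_{x*+(j−1)h}^{x*+jh} v(t) dt. Then the fifth-order big-stencil reconstruction error (1/30)A₋₂(h) − (13/60)A₋₁(h) + (47/60)A₀(h) + (9/20)A₁(h) − (1/20)A₂(h) − v(x*) is O(h⁵) as h → 0⁺. -/

import Mathlib

open Filter Topology Asymptotics
section helpers
open Set

private lemma itdWithin_eq (m : ℕ) {f : ℝ → ℝ} (hf : ContDiff ℝ (m : ℕ∞) f) {s : Set ℝ}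
    (hs : UniqueDiffOn ℝ s) {x : ℝ} (hx : x ∈ s) :
    iteratedDerivWithin m f s x = iteratedDeriv m f x := by
  have H := ((contDiffOn_univ.mpr hf).ftaylorSeriesWithin uniqueDiffOn_univ).mono (subset_univ s)
  rw [ftaylorSeriesWithin_univ] at H
  have h2 := H.eq_iteratedFDerivWithin_of_uniqueDiffOn le_rfl hs hx
  rw [iteratedDerivWithin_eq_iteratedFDerivWithin, iteratedDeriv_eq_iteratedFDeriv, ← h2]
  rfl

private lemma itd_add {m : ℕ} {f g : ℝ → ℝ} (hf : ContDiff ℝ (m : ℕ∞) f)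
    (hg : ContDiff ℝ (m : ℕ∞) g) (x : ℝ) :
    iteratedDeriv m (fun z => f z + g z) x = iteratedDeriv m f x + iteratedDeriv m g x := by
  simp only [← iteratedDerivWithin_univ]
  exact iteratedDerivWithin_add (mem_univ x) uniqueDiffOn_univ hf.contDiffWithinAt hg.contDiffWithinAt

private lemma itd_affine {m : ℕ} {V : ℝ → ℝ} (hV : ContDiff ℝ (m : ℕ∞) V) (x c : ℝ) :
    iteratedDeriv m (fun h : ℝ => V (x + c * h)) 0 = c ^ m * iteratedDeriv m V x := by
  have h2 : ContDiff ℝ (m : ℕ∞) (fun z : ℝ => V (x + z)) :=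
    hV.comp (contDiff_const.add contDiff_id)
  have h1 : (fun h : ℝ => V (x + c * h)) = fun h : ℝ => (fun z => V (x + z)) (c * h) := rfl
  rw [h1, iteratedDeriv_comp_const_mul h2 c, iteratedDeriv_comp_const_add]
  norm_num

private lemma itd_zero : ∀ k : ℕ, iteratedDeriv k (fun _ : ℝ => (0:ℝ)) = fun _ => 0 := by
  intro k
  induction k with
  | zero => simp
  | succ n ih =>
    rw [iteratedDeriv_succ', show deriv (fun _ : ℝ => (0:ℝ)) = fun _ => (0:ℝ) from funext fun y => deriv_const y 0, ih]

private lemma itd_linear (c : ℝ) (m : ℕ) :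
    iteratedDeriv m (fun h : ℝ => c * h) 0 = if m = 1 then c else 0 := by
  have hd : deriv (fun h : ℝ => c * h) = fun _ => c := by
    funext y
    simpa using ((hasDerivAt_id y).const_mul c).deriv
  match m with
  | 0 => simp
  | 1 => simp [iteratedDeriv_one, hd]
  | (k+2) =>
    rw [iteratedDeriv_succ', hd]
    rw [iteratedDeriv_succ', show deriv (fun _ : ℝ => c) = fun _ => (0:ℝ) from funext fun y => deriv_const y c]
    rw [itd_zero]
    simp

private lemma itd_cmul {m : ℕ} {f : ℝ → ℝ} (hf : ContDiff ℝ (m : ℕ∞) f) (c x : ℝ) :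
    iteratedDeriv m (fun z => c * f z) x = c * iteratedDeriv m f x := by
  simp only [← iteratedDerivWithin_univ]
  exact iteratedDerivWithin_const_mul (mem_univ x) uniqueDiffOn_univ c hf.contDiffWithinAt

private lemma itd_combo (m : ℕ) {V : ℝ → ℝ} (hV : ContDiff ℝ (m : ℕ∞) V) (x : ℝ)
    (a b c d e f g : ℝ) :
    iteratedDeriv m (fun h : ℝ => a * V (x + (-3) * h) + b * V (x + (-2) * h)
      + c * V (x + (-1) * h) + d * V (x + 0 * h) + e * V (x + 1 * h) + f * V (x + 2 * h)
      + g * h) 0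
    = a * ((-3:ℝ) ^ m * iteratedDeriv m V x) + b * ((-2:ℝ) ^ m * iteratedDeriv m V x)
      + c * ((-1:ℝ) ^ m * iteratedDeriv m V x) + d * ((0:ℝ) ^ m * iteratedDeriv m V x)
      + e * ((1:ℝ) ^ m * iteratedDeriv m V x) + f * ((2:ℝ) ^ m * iteratedDeriv m V x)
      + (if m = 1 then g else 0) := by
  have hc : ∀ k : ℝ, ContDiff ℝ (m : ℕ∞) (fun h : ℝ => V (x + k * h)) := fun k =>
    hV.comp (contDiff_const.add (contDiff_const.mul contDiff_id))
  have hcm : ∀ (u : ℝ) (k : ℝ), ContDiff ℝ (m : ℕ∞) (fun h : ℝ => u * V (x + k * h)) := fun u k =>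
    contDiff_const.mul (hc k)
  have hlin : ContDiff ℝ (m : ℕ∞) (fun h : ℝ => g * h) := contDiff_const.mul contDiff_id
  rw [itd_add ((((((hcm a (-3)).add (hcm b (-2))).add (hcm c (-1))).add (hcm d 0)).add
        (hcm e 1)).add (hcm f 2)) hlin,
      itd_add (((((hcm a (-3)).add (hcm b (-2))).add (hcm c (-1))).add (hcm d 0)).add (hcm e 1))
        (hcm f 2),
      itd_add ((((hcm a (-3)).add (hcm b (-2))).add (hcm c (-1))).add (hcm d 0)) (hcm e 1),
      itd_add (((hcm a (-3)).add (hcm b (-2))).add (hcm c (-1))) (hcm d 0),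
      itd_add ((hcm a (-3)).add (hcm b (-2))) (hcm c (-1)),
      itd_add (hcm a (-3)) (hcm b (-2)),
      itd_cmul (hc (-3)), itd_cmul (hc (-2)), itd_cmul (hc (-1)), itd_cmul (hc 0),
      itd_cmul (hc 1), itd_cmul (hc 2),
      itd_affine hV x (-3), itd_affine hV x (-2), itd_affine hV x (-1), itd_affine hV x 0,
      itd_affine hV x 1, itd_affine hV x 2, itd_linear g m]


end helpers

open Set in

/-- Fifth-order accuracy of the big-stencil finite volume reconstruction at the right cell
boundary of the middle cell, for a `C⁵` function, as the cell size `h → 0⁺`.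
Here `A j h = (1/h) ∫_{x+(j-1)h}^{x+jh} v`. -/
theorem stmt10 (v : ℝ → ℝ) (hv : ContDiff ℝ 5 v) (x : ℝ) :
    (fun h : ℝ =>
        (1 / 30) * ((1 / h) * ∫ t in (x + (-3) * h)..(x + (-2) * h), v t)
          - (13 / 60) * ((1 / h) * ∫ t in (x + (-2) * h)..(x + (-1) * h), v t)
          + (47 / 60) * ((1 / h) * ∫ t in (x + (-1) * h)..(x + 0 * h), v t)
          + (9 / 20) * ((1 / h) * ∫ t in (x + 0 * h)..(x + 1 * h), v t)
          - (1 / 20) * ((1 / h) * ∫ t in (x + 1 * h)..(x + 2 * h), v t)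
          - v x)
      =O[𝓝[>] (0 : ℝ)] (fun h => h ^ 5) := by
  set V : ℝ → ℝ := fun t => ∫ s in x..t, v s with hVdef
  have hVd : ∀ t, HasDerivAt V (v t) t := fun t =>
    (hv.continuous.integral_hasStrictDerivAt x t).hasDerivAt
  have hdV : deriv V = v := funext fun t => (hVd t).deriv
  have hV6 : ContDiff ℝ 6 V := by
    rw [show (6 : WithTop ℕ∞) = 5 + 1 by norm_num]
    refine contDiff_succ_iff_deriv.mpr ⟨fun t => (hVd t).differentiableAt, ?_, ?_⟩
    · intro hω; exact absurd hω (by simp)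
    · rw [hdV]; exact hv
  have hV6' : ∀ m : ℕ, m ≤ 6 → ContDiff ℝ (m : ℕ∞) V := fun m hm =>
    hV6.of_le (by exact_mod_cast Nat.cast_le.mpr hm)
  set F : ℝ → ℝ := fun h => (-1/30) * V (x + (-3) * h) + (1/4) * V (x + (-2) * h)
      + (-1) * V (x + (-1) * h) + (1/3) * V (x + 0 * h) + (1/2) * V (x + 1 * h)
      + (-1/20) * V (x + 2 * h) + (-(v x)) * h with hFdef
  have hc6 : ∀ k : ℝ, ContDiff ℝ 6 (fun h : ℝ => V (x + k * h)) := fun k =>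
    hV6.comp (contDiff_const.add (contDiff_const.mul contDiff_id))
  have hF6 : ContDiff ℝ 6 F :=
    (((((((contDiff_const.mul (hc6 (-3))).add (contDiff_const.mul (hc6 (-2)))).add
      (contDiff_const.mul (hc6 (-1)))).add (contDiff_const.mul (hc6 0))).add
      (contDiff_const.mul (hc6 1))).add (contDiff_const.mul (hc6 2))).add
      (contDiff_const.mul contDiff_id))
  have hF6' : ∀ m : ℕ, m ≤ 6 → ContDiff ℝ (m : ℕ∞) F := fun m hm =>
    hF6.of_le (by exact_mod_cast Nat.cast_le.mpr hm)
  have hd1 : iteratedDeriv 1 V x = v x := by rw [iteratedDeriv_one, hdV]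
  have hiter : ∀ m : ℕ, m ≤ 5 → iteratedDeriv m F 0 = 0 := by
    intro m hm
    rw [hFdef]
    interval_cases m <;>
      rw [itd_combo _ (hV6' _ (by norm_num)) x] <;>
      · try rw [hd1]
        norm_num
        try ring
  obtain ⟨C, hC⟩ := (isCompact_Icc (a := (0:ℝ)) (b := 1)).exists_bound_of_continuousOn
    (ContDiff.continuous_iteratedDeriv 6 hF6 (by exact_mod_cast le_rfl)).continuousOn
  have hC0 : 0 ≤ C := le_trans (norm_nonneg _) (hC 0 ⟨le_rfl, by norm_num⟩)
  have hbound : ∀ h ∈ Icc (0:ℝ) 1, ‖F h‖ ≤ C * h ^ 6 / 120 := by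
    intro h hh
    have htay : taylorWithinEval F 5 (Icc 0 1) 0 h = 0 := by
      rw [taylor_within_apply]
      refine Finset.sum_eq_zero fun k hk => ?_
      have hk5 : k ≤ 5 := by have := Finset.mem_range.mp hk; omega
      rw [itdWithin_eq k (hF6' k (by omega)) (uniqueDiffOn_Icc one_pos)
        (left_mem_Icc.mpr zero_le_one), hiter k hk5]
      simp
    have hCb : ∀ y ∈ Icc (0:ℝ) 1, ‖iteratedDerivWithin 6 F (Icc (0:ℝ) 1) y‖ ≤ C := by
      intro y hy
      rw [itdWithin_eq 6 (hF6' 6 le_rfl) (uniqueDiffOn_Icc one_pos) hy]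
      exact hC y hy
    have := taylor_mean_remainder_bound (f := F) (a := 0) (b := 1) (n := 5) zero_le_one
      (by exact_mod_cast hF6.contDiffOn) hh hCb
    rw [htay] at this
    simpa [Nat.factorial] using this
  rw [Asymptotics.isBigO_iff]
  refine ⟨C / 120, ?_⟩
  filter_upwards [Ioc_mem_nhdsGT_of_mem (by norm_num : (0:ℝ) ∈ Ico (0:ℝ) 1)] with h hh
  obtain ⟨hpos, hle⟩ := hh
  have hne : h ≠ 0 := ne_of_gt hpos
  have hint : ∀ a b : ℝ, (∫ t in a..b, v t) = V b - V a := fun a b => by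
    simp only [hVdef]
    exact (intervalIntegral.integral_interval_sub_left (hv.continuous.intervalIntegrable _ _)
      (hv.continuous.intervalIntegrable _ _)).symm
  have hFh : (1 / 30) * ((1 / h) * ∫ t in (x + (-3) * h)..(x + (-2) * h), v t)
          - (13 / 60) * ((1 / h) * ∫ t in (x + (-2) * h)..(x + (-1) * h), v t)
          + (47 / 60) * ((1 / h) * ∫ t in (x + (-1) * h)..(x + 0 * h), v t)
          + (9 / 20) * ((1 / h) * ∫ t in (x + 0 * h)..(x + 1 * h), v t)
          - (1 / 20) * ((1 / h) * ∫ t in (x + 1 * h)..(x + 2 * h), v t)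
          - v x = (1 / h) * F h := by
    rw [hint, hint, hint, hint, hint, hFdef]
    field_simp
    ring
  simp only [hFh]
  have hb := hbound h ⟨le_of_lt hpos, hle⟩
  have h1 : ‖(1 / h) * F h‖ = (1 / h) * ‖F h‖ := by
    rw [norm_mul, Real.norm_eq_abs, abs_of_pos (by positivity)]
  rw [h1]
  calc (1 / h) * ‖F h‖ ≤ (1 / h) * (C * h ^ 6 / 120) := by gcongr
    _ = C / 120 * ‖h ^ 5‖ := by
        rw [Real.norm_eq_abs, abs_of_pos (by positivity)]
        field_simp
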